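/- Suppose f : ℝ^D → ℝ is differentiable with L₀-Lipschitz gradient and is c-strongly convex with 0 < c < L₀, with minimizer θ*. Let 0 < α < 2/L₀ and suppose gradient iterates θ_{k+1} = θ_k − α G_k where ‖G_k − ∇f(θ_k)‖ ≤ ε for all k and ‖∇f(θ)‖ ≤ M for all θ along the iteration. Then limsup_{k→∞} (f(θ_k) − f(θ*)) ≤ (α L₀ ε² + (2αL₀+2) ε M) / (4c − 2αL₀c). -/

import Mathlib

open Filter

lemma line_hasDerivAt' {E : Type*} [NormedAddCommGroup E] [InnerProductSpace ℝ E] [CompleteSpace E]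
    (f : E → ℝ) (hdiff : Differentiable ℝ f) (x v : E) (t : ℝ) :
    HasDerivAt (fun s : ℝ => f (x + s • v)) (inner ℝ (gradient f (x + t • v)) v : ℝ) t := by
  have h1 : HasDerivAt (fun s : ℝ => x + s • v) v t := by
    simpa using ((hasDerivAt_id t).smul_const v).const_add x
  have h2 : HasFDerivAt f (InnerProductSpace.toDual ℝ E (gradient f (x + t • v))) (x + t • v) :=
    (hdiff (x + t • v)).hasGradientAt
  have := h2.comp_hasDerivAt t h1
  simpa [Function.comp_def] using this

lemma descent_lemma' {E : Type*} [NormedAddCommGroup E] [InnerProductSpace ℝ E] [CompleteSpace E]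
    (f : E → ℝ) (L₀ : ℝ) (hdiff : Differentiable ℝ f)
    (hlip : ∀ θ θ' : E, ‖gradient f θ - gradient f θ'‖ ≤ L₀ * ‖θ - θ'‖)
    (x y : E) :
    f y ≤ f x + (inner ℝ (gradient f x) (y - x) : ℝ) + L₀ / 2 * ‖y - x‖ ^ 2 := by
  set v := y - x with hv
  set φ : ℝ → ℝ := fun t => f (x + t • v) - t * (inner ℝ (gradient f x) v : ℝ)
      - L₀ / 2 * t ^ 2 * ‖v‖ ^ 2 with hφ
  have hφd : ∀ t : ℝ, HasDerivAt φ
      ((inner ℝ (gradient f (x + t • v)) v : ℝ) - (inner ℝ (gradient f x) v : ℝ)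
        - L₀ * t * ‖v‖ ^ 2) t := by
    intro t
    have h1 := line_hasDerivAt' f hdiff x v t
    have h2 : HasDerivAt (fun t : ℝ => t * (inner ℝ (gradient f x) v : ℝ))
        (inner ℝ (gradient f x) v : ℝ) t := by
      simpa using (hasDerivAt_id t).mul_const (inner ℝ (gradient f x) v : ℝ)
    have h3 : HasDerivAt (fun t : ℝ => L₀ / 2 * t ^ 2 * ‖v‖ ^ 2)
        (L₀ * t * ‖v‖ ^ 2) t := by
      have h : HasDerivAt (fun t : ℝ => t ^ 2) (2 * t) t := by
        simpa using hasDerivAt_pow 2 t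
      have := (h.const_mul (L₀ / 2)).mul_const (‖v‖ ^ 2)
      rw [show L₀ * t * ‖v‖ ^ 2 = L₀ / 2 * (2 * t) * ‖v‖ ^ 2 by ring]
      exact this
    exact (h1.sub h2).sub h3
  have key : φ 1 ≤ φ 0 := by
    have hanti : AntitoneOn φ (Set.Icc (0:ℝ) 1) := by
      apply antitoneOn_of_deriv_nonpos (convex_Icc 0 1)
      · exact Continuous.continuousOn (by
          have : Differentiable ℝ φ := fun t => (hφd t).differentiableAt
          exact this.continuous)
      · intro t ht
        exact ((hφd t).differentiableAt).differentiableWithinAt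
      · intro t ht
        rw [interior_Icc] at ht
        rw [(hφd t).deriv]
        have hcs : (inner ℝ (gradient f (x + t • v)) v : ℝ) - (inner ℝ (gradient f x) v : ℝ)
            ≤ ‖gradient f (x + t • v) - gradient f x‖ * ‖v‖ := by
          rw [← inner_sub_left]
          exact real_inner_le_norm _ _
        have hl := hlip (x + t • v) x
        have hx : ‖x + t • v - x‖ = t * ‖v‖ := by
          simp [norm_smul, abs_of_nonneg ht.1.le]
        rw [hx] at hl
        have h0 : 0 ≤ ‖v‖ := norm_nonneg v
        nlinarith [hcs, hl, mul_le_mul_of_nonneg_right hl h0]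
    exact hanti (by norm_num) (by norm_num) (by norm_num)
  simp only [hφ] at key
  simp only [one_smul, zero_smul, add_zero, one_pow, one_mul, zero_mul, zero_pow] at key
  have hxy : x + v = y := by simp [hv]
  rw [hxy] at key
  linarith [key]


lemma aux_pl (c n d ek : ℝ) (hc : 0 < c)
    (h1 : ek ≤ n * d - c / 2 * d ^ 2) : 2 * c * ek ≤ n ^ 2 := by
  nlinarith [sq_nonneg (n - c * d), mul_le_mul_of_nonneg_left h1 (by positivity : (0:ℝ) ≤ 2 * c)]

lemma aux_step (L₀ c α ε M ek ek1 n ip q2 : ℝ)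
    (hd : ek1 ≤ ek - α * (n ^ 2 + ip) + L₀ / 2 * (α ^ 2 * q2))
    (hip : -(M * ε) ≤ ip) (hq : q2 ≤ n ^ 2 + 2 * ε * M + ε ^ 2)
    (hPL : 2 * c * ek ≤ n ^ 2)
    (hα₀ : 0 < α) (hαL : α * L₀ < 2) (hL₀ : 0 < L₀) (hc : 0 < c) :
    ek1 ≤ (1 - α * c * (2 - α * L₀)) * ek
      + (α ^ 2 * L₀ * ε ^ 2 / 2 + α * (α * L₀ + 1) * ε * M) := by
  have h1 : α * (-(M * ε)) ≤ α * ip := mul_le_mul_of_nonneg_left hip hα₀.le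
  have h2 : L₀ / 2 * α ^ 2 * q2 ≤ L₀ / 2 * α ^ 2 * (n ^ 2 + 2 * ε * M + ε ^ 2) :=
    mul_le_mul_of_nonneg_left hq (by positivity)
  have hcoef : 0 ≤ α * (1 - α * L₀ / 2) := by nlinarith
  have h3 : α * (1 - α * L₀ / 2) * (2 * c * ek) ≤ α * (1 - α * L₀ / 2) * n ^ 2 :=
    mul_le_mul_of_nonneg_left hPL hcoef
  nlinarith [h1, h2, h3, hd]

theorem inexact_gradient_descent_limsup (D : ℕ)
    (f : EuclideanSpace ℝ (Fin D) → ℝ) (L₀ c α ε M : ℝ)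
    (hdiff : Differentiable ℝ f)
    (hlip : ∀ θ θ' : EuclideanSpace ℝ (Fin D),
      ‖gradient f θ - gradient f θ'‖ ≤ L₀ * ‖θ - θ'‖)
    (hconv : ∀ θ θ' : EuclideanSpace ℝ (Fin D),
      f θ' ≥ f θ + (inner ℝ (gradient f θ) (θ' - θ) : ℝ) + c / 2 * ‖θ' - θ‖ ^ 2)
    (hc₀ : 0 < c) (hcL : c < L₀) (hα₀ : 0 < α) (hα : α < 2 / L₀)
    (hε : 0 ≤ ε) (hM : 0 ≤ M)
    (θstar : EuclideanSpace ℝ (Fin D)) (hmin : ∀ x, f θstar ≤ f x)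
    (θ : ℕ → EuclideanSpace ℝ (Fin D)) (G : ℕ → EuclideanSpace ℝ (Fin D))
    (hupd : ∀ k, θ (k + 1) = θ k - α • G k)
    (hG : ∀ k, ‖G k - gradient f (θ k)‖ ≤ ε)
    (hgradM : ∀ k, ‖gradient f (θ k)‖ ≤ M) :
    Filter.limsup (fun k => f (θ k) - f θstar) Filter.atTop ≤
      (α * L₀ * ε ^ 2 + (2 * α * L₀ + 2) * ε * M) / (4 * c - 2 * α * L₀ * c) := by
  have hL₀ : 0 < L₀ := hc₀.trans hcL
  have hαL : α * L₀ < 2 := by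
    have := (lt_div_iff₀ hL₀).mp hα
    linarith
  set R : ℝ := (α * L₀ * ε ^ 2 + (2 * α * L₀ + 2) * ε * M) / (4 * c - 2 * α * L₀ * c) with hR
  set ρ : ℝ := 1 - α * c * (2 - α * L₀) with hρ
  have hden : 0 < 4 * c - 2 * α * L₀ * c := by nlinarith
  have hρ1 : ρ < 1 := by
    have : 0 < α * c * (2 - α * L₀) := mul_pos (mul_pos hα₀ hc₀) (by linarith)
    linarith
  have hρ0 : 0 ≤ ρ := by
    have h1 : α * (2 - α * L₀) * L₀ ≤ 1 := by nlinarith [sq_nonneg (α * L₀ - 1)]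
    have h2 : c * (α * (2 - α * L₀) * L₀) ≤ c * 1 := mul_le_mul_of_nonneg_left h1 hc₀.le
    rw [hρ]
    nlinarith
  have hR0 : 0 ≤ R := by
    apply div_nonneg _ hden.le
    positivity
  set e : ℕ → ℝ := fun k => f (θ k) - f θstar with he
  have he0 : ∀ k, 0 ≤ e k := fun k => by simp [he, hmin (θ k)]
  -- one-step recursion
  have hstep : ∀ k, e (k + 1) ≤ ρ * e k + (1 - ρ) * R := by
    intro k
    set g := gradient f (θ k) with hg
    set δ := G k - g with hδ
    have hGk : G k = g + δ := by simp [hδ]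
    have hdesc := descent_lemma' f L₀ hdiff hlip (θ k) (θ (k + 1))
    rw [← hg] at hdesc
    have hdiffθ : θ (k + 1) - θ k = -(α • G k) := by rw [hupd k]; abel
    rw [hdiffθ] at hdesc
    have hinner : (inner ℝ g (-(α • G k)) : ℝ) = -(α * ((inner ℝ g (G k) : ℝ))) := by
      rw [inner_neg_right, real_inner_smul_right]
    have hnorm : ‖-(α • G k)‖ ^ 2 = α ^ 2 * ‖G k‖ ^ 2 := by
      rw [norm_neg, norm_smul]
      simp [abs_of_nonneg hα₀.le, mul_pow]
    rw [hinner, hnorm] at hdesc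
    -- inner products
    have hinnerGk : (inner ℝ g (G k) : ℝ) = ‖g‖ ^ 2 + (inner ℝ g δ : ℝ) := by
      rw [hGk, inner_add_right, real_inner_self_eq_norm_sq]
    have hδε : ‖δ‖ ≤ ε := by rw [hδ, hg]; exact hG k
    have hgM : ‖g‖ ≤ M := by rw [hg]; exact hgradM k
    have hid : |(inner ℝ g δ : ℝ)| ≤ M * ε := by
      calc |(inner ℝ g δ : ℝ)| ≤ ‖g‖ * ‖δ‖ := abs_real_inner_le_norm _ _
        _ ≤ M * ε := by
            apply mul_le_mul hgM hδε (norm_nonneg _) hM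
    have hnormGk : ‖G k‖ ^ 2 ≤ ‖g‖ ^ 2 + 2 * ε * M + ε ^ 2 := by
      have h1 : ‖G k‖ ≤ ‖g‖ + ε := by
        calc ‖G k‖ = ‖g + δ‖ := by rw [hGk]
          _ ≤ ‖g‖ + ‖δ‖ := norm_add_le _ _
          _ ≤ ‖g‖ + ε := by linarith
      have h2 : ‖G k‖ ^ 2 ≤ (‖g‖ + ε) ^ 2 := by
        apply pow_le_pow_left₀ (norm_nonneg _) h1
      nlinarith [norm_nonneg (G k), norm_nonneg g]
    -- PL inequality: e k ≤ ‖g‖² / (2c)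
    have hPL : 2 * c * e k ≤ ‖g‖ ^ 2 := by
      have hc' := hconv (θ k) θstar
      rw [← hg] at hc'
      have hcs : -(‖g‖ * ‖θstar - θ k‖) ≤ (inner ℝ g (θstar - θ k) : ℝ) := by
        have h := abs_le.mp (abs_real_inner_le_norm g (θstar - θ k))
        linarith [h.1]
      have h1 : e k ≤ ‖g‖ * ‖θstar - θ k‖ - c / 2 * ‖θstar - θ k‖ ^ 2 := by
        simp only [he]
        linarith
      exact aux_pl c ‖g‖ ‖θstar - θ k‖ (e k) hc₀ h1
    have hBR : (1 - ρ) * R = α ^ 2 * L₀ * ε ^ 2 / 2 + α * (α * L₀ + 1) * ε * M := by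
      rw [hρ, hR]
      rw [mul_div_assoc', div_eq_iff hden.ne']
      ring
    have hd : e (k + 1) ≤ e k - α * (‖g‖ ^ 2 + (inner ℝ g δ : ℝ)) + L₀ / 2 * (α ^ 2 * ‖G k‖ ^ 2) := by
      simp only [he]
      rw [← hinnerGk]
      linarith [hdesc]
    have habs := abs_le.mp hid
    have := aux_step L₀ c α ε M (e k) (e (k + 1)) ‖g‖ (inner ℝ g δ : ℝ) (‖G k‖ ^ 2)
      hd habs.1 hnormGk hPL hα₀ hαL hL₀ hc₀
    rw [hρ, hBR]
    exact this
  -- iterate the recursion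
  have hiter : ∀ k, e k ≤ ρ ^ k * e 0 + R := by
    intro k
    induction k with
    | zero => simp; linarith [hR0]
    | succ n ih =>
        calc e (n + 1) ≤ ρ * e n + (1 - ρ) * R := hstep n
          _ ≤ ρ * (ρ ^ n * e 0 + R) + (1 - ρ) * R :=
              by linarith [mul_le_mul_of_nonneg_left ih hρ0]
          _ = ρ ^ (n + 1) * e 0 + R := by ring
  -- limsup
  have htend : Tendsto (fun k => ρ ^ k * e 0 + R) atTop (nhds R) := by
    have h1 : Tendsto (fun k : ℕ => ρ ^ k) atTop (nhds 0) :=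
      tendsto_pow_atTop_nhds_zero_of_lt_one hρ0 hρ1
    have := (h1.mul_const (e 0)).add_const R
    simpa using this
  have hbound : limsup e atTop ≤ limsup (fun k => ρ ^ k * e 0 + R) atTop := by
    exact limsup_le_limsup (Eventually.of_forall hiter)
      (isCoboundedUnder_le_of_le atTop (fun k => he0 k))
      htend.isBoundedUnder_le
  rw [htend.limsup_eq] at hbound
  exact hbound
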